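/- Let $\psi : Y \to (0,\infty)$ be integrable on a probability space $(Y,m)$ with metric $d$, $\eta \in (0,1]$, and suppose $|\log\psi(x)-\log\psi(y)| \le L\, d(x,y)^\eta$ for all $x,y$, where $L = |\psi|_{\eta,\ell}$. Then for every $t \in [0, e^{-L})$, the function $\psi - t\int_Y \psi\,dm$ is strictly positive and satisfies $\bigl|\log(\psi(x) - t\int\psi\,dm) - \log(\psi(y) - t\int\psi\,dm)\bigr| \le \frac{L}{1 - t e^{L}}\, d(x,y)^\eta$ for all $x,y \in Y$. -/

import Mathlib

open MeasureTheory

/-- Key calculus lemma: subtracting a constant `c ≤ θ b` worsens the log-Lipschitz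
ratio by at most a factor `1/(1-θ)`. -/
theorem log_sub_const_aux (θ c b a : ℝ) (hθ0 : 0 ≤ θ) (hθ1 : θ < 1)
    (hb : 0 < b) (hba : b ≤ a) (hc0 : 0 ≤ c) (hcb : c ≤ θ * b) :
    Real.log (a - c) - Real.log (b - c) ≤ (Real.log a - Real.log b) / (1 - θ) := by
  have h1θ : 0 < 1 - θ := by linarith
  have hbc : 0 < b - c := by nlinarith
  set g : ℝ → ℝ := fun s => (1 - θ)⁻¹ * Real.log s - Real.log (s - c) with hg
  have hderiv : ∀ s ∈ Set.Ioo b a,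
      HasDerivAt g ((1 - θ)⁻¹ * s⁻¹ - (s - c)⁻¹) s := by
    intro s hs
    have hs0 : 0 < s := lt_trans hb hs.1
    have hsc : 0 < s - c := by linarith [hs.1]
    have h1 : HasDerivAt (fun u : ℝ => Real.log u) s⁻¹ s := Real.hasDerivAt_log hs0.ne'
    have h2 : HasDerivAt (fun u : ℝ => Real.log (u - c)) (s - c)⁻¹ s := by
      have := (Real.hasDerivAt_log hsc.ne').comp s ((hasDerivAt_id s).sub_const c)
      simpa [Function.comp_def] using this
    exact (h1.const_mul ((1 - θ)⁻¹)).sub h2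
  have hcont : ContinuousOn g (Set.Icc b a) := by
    apply ContinuousOn.sub
    · exact continuousOn_const.mul (Real.continuousOn_log.mono (by
        intro s hs; simp only [Set.mem_compl_singleton_iff]; exact (lt_of_lt_of_le hb hs.1).ne'))
    · apply Real.continuousOn_log.comp (by fun_prop)
      intro s hs
      have : 0 < s - c := by linarith [hs.1]
      exact fun h => absurd h this.ne'
  have hmono : MonotoneOn g (Set.Icc b a) := by
    apply monotoneOn_of_deriv_nonneg (convex_Icc b a) hcont
    · intro s hs
      rw [interior_Icc] at hs
      exact (hderiv s hs).differentiableAt.differentiableWithinAt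
    · intro s hs
      rw [interior_Icc] at hs
      rw [(hderiv s hs).deriv]
      have hs0 : 0 < s := lt_trans hb hs.1
      have hsc : 0 < s - c := by linarith [hs.1]
      have hkey : (s - c)⁻¹ ≤ ((1 - θ) * s)⁻¹ := by
        apply inv_anti₀ (by positivity)
        nlinarith [hs.1.le]
      have : ((1 - θ) * s)⁻¹ = (1 - θ)⁻¹ * s⁻¹ := by
        rw [mul_inv]
      linarith [hkey.trans_eq this]
  have hab := hmono (Set.left_mem_Icc.2 hba) (Set.right_mem_Icc.2 hba) hba
  simp only [hg] at hab
  have : Real.log (a - c) - Real.log (b - c)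
      ≤ (1 - θ)⁻¹ * Real.log a - (1 - θ)⁻¹ * Real.log b := by linarith
  calc Real.log (a - c) - Real.log (b - c)
      ≤ (1 - θ)⁻¹ * Real.log a - (1 - θ)⁻¹ * Real.log b := this
    _ = (Real.log a - Real.log b) / (1 - θ) := by ring

/-- If `ψ : Y → (0,∞)` is integrable on a metric probability space with log-Hölder
constant `L`, then for each `t ∈ [0, e^{-L})` the function `ψ - t ∫ ψ dm` is strictly
positive and has log-Hölder constant at most `L / (1 - t e^L)`. -/
theorem log_holder_sub_const {Y : Type*} [MetricSpace Y] [MeasurableSpace Y]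
    (m : Measure Y) [IsProbabilityMeasure m]
    (hdiam : ∀ x y : Y, dist x y ≤ 1)
    (η L : ℝ) (hη : η ∈ Set.Ioc (0:ℝ) 1) (hL : 0 ≤ L)
    (ψ : Y → ℝ) (hψ : ∀ x, 0 < ψ x) (hint : Integrable ψ m)
    (hlog : ∀ x y : Y, |Real.log (ψ x) - Real.log (ψ y)| ≤ L * dist x y ^ η)
    (t : ℝ) (ht0 : 0 ≤ t) (ht : t < Real.exp (-L)) :
    (∀ x, 0 < ψ x - t * ∫ y, ψ y ∂m) ∧
      ∀ x y : Y,
        |Real.log (ψ x - t * ∫ z, ψ z ∂m) - Real.log (ψ y - t * ∫ z, ψ z ∂m)|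
          ≤ L / (1 - t * Real.exp L) * dist x y ^ η := by
  have hne : Nonempty Y := by
    by_contra h
    have h1 : (m Set.univ) = 1 := measure_univ
    rw [Set.univ_eq_empty_iff.2 (not_nonempty_iff.1 h)] at h1
    simp at h1
  set I := ∫ z, ψ z ∂m with hI
  have hratio : ∀ x y : Y, ψ x ≤ Real.exp L * ψ y := by
    intro x y
    have hd : dist x y ^ η ≤ 1 :=
      Real.rpow_le_one dist_nonneg (hdiam x y) hη.1.le
    have h1 : Real.log (ψ x) - Real.log (ψ y) ≤ L := by
      have := (le_abs_self _).trans (hlog x y)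
      nlinarith
    calc ψ x = Real.exp (Real.log (ψ x)) := (Real.exp_log (hψ x)).symm
      _ ≤ Real.exp (L + Real.log (ψ y)) := Real.exp_le_exp.2 (by linarith)
      _ = Real.exp L * ψ y := by rw [Real.exp_add, Real.exp_log (hψ y)]
  have hIle : ∀ x, I ≤ Real.exp L * ψ x := by
    intro x
    have h := integral_mono hint (integrable_const (Real.exp L * ψ x))
      (fun y => hratio y x)
    simpa using h
  have hIpos : 0 < I := by
    obtain ⟨x0⟩ := hne
    have hlow : ∀ y, Real.exp (-L) * ψ x0 ≤ ψ y := by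
      intro y
      have := hratio x0 y
      rw [Real.exp_neg]
      have hE : 0 < Real.exp L := Real.exp_pos L
      rw [inv_mul_le_iff₀ hE] at *
      nlinarith
    have h := integral_mono (integrable_const (Real.exp (-L) * ψ x0)) hint hlow
    simp only [integral_const, measure_univ, probReal_univ, ENNReal.toReal_one, one_smul] at h
    have : 0 < Real.exp (-L) * ψ x0 := mul_pos (Real.exp_pos _) (hψ x0)
    linarith
  have hθ : t * Real.exp L < 1 := by
    have hE : 0 < Real.exp L := Real.exp_pos L
    have := mul_lt_mul_of_pos_right ht hE
    rwa [Real.exp_neg, inv_mul_cancel₀ hE.ne'] at this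
  have h1θ : 0 < 1 - t * Real.exp L := by linarith
  have hpos : ∀ x, 0 < ψ x - t * I := by
    intro x
    have h1 : t * I ≤ t * (Real.exp L * ψ x) := mul_le_mul_of_nonneg_left (hIle x) ht0
    nlinarith [hψ x]
  refine ⟨hpos, ?_⟩
  have key : ∀ x y : Y, ψ y ≤ ψ x →
      Real.log (ψ x - t * I) - Real.log (ψ y - t * I)
        ≤ L / (1 - t * Real.exp L) * dist x y ^ η := by
    intro x y hxy
    have hcb : t * I ≤ t * Real.exp L * ψ y := by
      have := mul_le_mul_of_nonneg_left (hIle y) ht0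
      nlinarith
    have h1 := log_sub_const_aux (t * Real.exp L) (t * I) (ψ y) (ψ x)
      (mul_nonneg ht0 (Real.exp_pos L).le) hθ (hψ y) hxy
      (mul_nonneg ht0 hIpos.le) hcb
    have h2 : Real.log (ψ x) - Real.log (ψ y) ≤ L * dist x y ^ η :=
      (le_abs_self _).trans (hlog x y)
    calc Real.log (ψ x - t * I) - Real.log (ψ y - t * I)
        ≤ (Real.log (ψ x) - Real.log (ψ y)) / (1 - t * Real.exp L) := h1
      _ ≤ (L * dist x y ^ η) / (1 - t * Real.exp L) := by gcongr
      _ = L / (1 - t * Real.exp L) * dist x y ^ η := by ring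
  intro x y
  have hrhs : 0 ≤ L / (1 - t * Real.exp L) * dist x y ^ η :=
    mul_nonneg (div_nonneg hL h1θ.le) (Real.rpow_nonneg dist_nonneg _)
  rw [abs_sub_le_iff]
  rcases le_total (ψ y) (ψ x) with h | h
  · refine ⟨key x y h, ?_⟩
    have : Real.log (ψ y - t * I) ≤ Real.log (ψ x - t * I) :=
      Real.log_le_log (hpos y) (by linarith)
    linarith
  · refine ⟨?_, by rw [dist_comm]; exact key y x h⟩
    have : Real.log (ψ x - t * I) ≤ Real.log (ψ y - t * I) :=
      Real.log_le_log (hpos x) (by linarith)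
    linarith
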